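/- Let G = (V, E, w, μ) be a connected submodular hypergraph and p ≥ 1. Then every eigenvector of the p-Laplacian △_p associated with the eigenvalue 0 has constant entries. In particular, if x ∈ ℝ^N satisfies Q_p(x) = 0, then x is a constant vector. -/

import Mathlib

open scoped BigOperators
open Finset

noncomputable section

/-- A set function on the ground set `Fin N` is submodular:
`F(S ∪ T) + F(S ∩ T) ≤ F(S) + F(T)` for all `S, T`. -/
def Submodular {N : ℕ} (F : Finset (Fin N) → ℝ) : Prop :=
  ∀ S T : Finset (Fin N), F (S ∪ T) + F (S ∩ T) ≤ F S + F T

/-- The Lovász extension of a set function, written in its (tie-breaking independent)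
level-set integral form, which agrees with the usual sorted-sum definition
`f(x) = Σ_{j=1}^{N-1} F({i_1,…,i_j})(x_{i_j} − x_{i_{j+1}})` for a nonincreasing
ordering `x_{i_1} ≥ … ≥ x_{i_N}`. -/
def lovasz {N : ℕ} (F : Finset (Fin N) → ℝ) (x : Fin N → ℝ) : ℝ :=
  ∫ t in (⨅ v, x v)..(⨆ v, x v), F (Finset.univ.filter fun v => t < x v)

/-- The inner product `⟨y, x⟩ = Σ_v y_v x_v`. -/
def dotp {N : ℕ} (y x : Fin N → ℝ) : ℝ := ∑ v, y v * x v

/-- The set of subgradients of `f : ℝ^N → ℝ` at `x`. -/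
def subgradients {N : ℕ} (f : (Fin N → ℝ) → ℝ) (x : Fin N → ℝ) : Set (Fin N → ℝ) :=
  {y | ∀ x', dotp y (x' - x) ≤ f x' - f x}

/-- The base polytope of a set function: `y(S) ≤ F(S)` for all `S ⊆ V` and `y(V) = 0`. -/
def basePolytope {N : ℕ} (F : Finset (Fin N) → ℝ) : Set (Fin N → ℝ) :=
  {y | (∀ S : Finset (Fin N), ∑ v ∈ S, y v ≤ F S) ∧ ∑ v, y v = 0}

/-- The sign function (`sgn 0 = 0`). -/
def sgn (a : ℝ) : ℝ := if 0 < a then 1 else if a < 0 then -1 else 0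

/-- A vector is nonconstant. -/
def Nonconstant {N : ℕ} (x : Fin N → ℝ) : Prop := ∃ u v, x u ≠ x v

/-- Restriction of a vector to a subset of vertices (zero outside that subset). -/
def restrictVec {N : ℕ} (x : Fin N → ℝ) (C : Finset (Fin N)) : Fin N → ℝ :=
  fun v => if v ∈ C then x v else 0

/-- Euclidean norm on `ℝ^N`. -/
def l2norm {N : ℕ} (z : Fin N → ℝ) : ℝ := Real.sqrt (∑ v, z v ^ 2)

/-- Supremum norm on `ℝ^N`. -/
def linfNorm {N : ℕ} (z : Fin N → ℝ) : ℝ := ⨆ v, |z v|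

/-- A submodular hypergraph `G = (V, E, w, μ)` on `V = Fin N`: hyperedges `E`,
positive vertex weights `μ`, and for each hyperedge `e ∈ E` a scalar `θ_e > 0`
together with a normalized symmetric submodular weight `w_e : 2^e → [0,1]`
(extended to all of `2^V` by `w_e(S) = w_e(S ∩ e)`). -/
structure SubmodularHypergraph (N : ℕ) where
  E : Finset (Finset (Fin N))
  μ : Fin N → ℝ
  μ_pos : ∀ v, 0 < μ v
  θ : Finset (Fin N) → ℝ
  θ_pos : ∀ e ∈ E, 0 < θ e
  w : Finset (Fin N) → Finset (Fin N) → ℝ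
  w_inter : ∀ e ∈ E, ∀ S, w e S = w e (S ∩ e)
  w_submodular : ∀ e ∈ E, Submodular (w e)
  w_nonneg : ∀ e ∈ E, ∀ S, 0 ≤ w e S
  w_le_one : ∀ e ∈ E, ∀ S, w e S ≤ 1
  w_empty : ∀ e ∈ E, w e ∅ = 0
  w_normalized : ∀ e ∈ E, ∃ S ⊆ e, w e S = 1
  w_symm : ∀ e ∈ E, ∀ S ⊆ e, w e S = w e (e \ S)

namespace SubmodularHypergraph

variable {N : ℕ} (G : SubmodularHypergraph N)

/-- `vol(S) = Σ_{v ∈ S} μ_v`. -/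
def vol (S : Finset (Fin N)) : ℝ := ∑ v ∈ S, G.μ v

/-- `vol(∂S) = Σ_{e ∈ E} θ_e w_e(S)`. -/
def volB (S : Finset (Fin N)) : ℝ := ∑ e ∈ G.E, G.θ e * G.w e S

/-- The Lovász extension `f_e` of the hyperedge weight `w_e`. -/
def fe (e : Finset (Fin N)) (x : Fin N → ℝ) : ℝ := lovasz (G.w e) x

/-- `Q_p(x) = Σ_{e ∈ E} θ_e f_e(x)^p`. -/
def Q (p : ℝ) (x : Fin N → ℝ) : ℝ := ∑ e ∈ G.E, G.θ e * G.fe e x ^ p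

/-- `‖x‖_{ℓp,μ}^p = Σ_v μ_v |x_v|^p`. -/
def normLpPow (p : ℝ) (x : Fin N → ℝ) : ℝ := ∑ v, G.μ v * |x v| ^ p

/-- `G` is connected: `vol(∂S) > 0` for all nonempty proper `S ⊂ V`. -/
def Connected : Prop :=
  ∀ S : Finset (Fin N), S.Nonempty → S ≠ Finset.univ → 0 < G.volB S

/-- Vertices `u, v` are connected in `G`: every `S` with `u ∈ S`, `v ∉ S` has
`vol(∂S) > 0`. -/
def VertConnected (u v : Fin N) : Prop :=
  ∀ S : Finset (Fin N), u ∈ S → v ∉ S → 0 < G.volB S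

/-- The conductance `c(S) = vol(∂S) / min{vol(S), vol(V∖S)}`. -/
def conductance (S : Finset (Fin N)) : ℝ := G.volB S / min (G.vol S) (G.vol Sᶜ)

/-- The degree `d_v = Σ_{e ∈ E : v ∈ e} θ_e`. -/
def degree (v : Fin N) : ℝ := ∑ e ∈ G.E.filter (fun e => v ∈ e), G.θ e

/-- `τ = max_v d_v / μ_v`. -/
def tau : ℝ := ⨆ v, G.degree v / G.μ v

/-- `G` is homogeneous: `w_e(S) = 1` for every `S ∈ 2^e ∖ {∅, e}`. -/
def Homogeneous : Prop :=
  ∀ e ∈ G.E, ∀ S ⊆ e, S ≠ ∅ → S ≠ e → G.w e S = 1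

/-- `(λ, x)` is an eigenpair of the `p`-Laplacian `△_p` (for `p > 1` and for `p = 1`). -/
def IsEigenpair (p lam : ℝ) (x : Fin N → ℝ) : Prop :=
  x ≠ 0 ∧
  ∃ y : Finset (Fin N) → Fin N → ℝ,
    (∀ e ∈ G.E, y e ∈ basePolytope (G.w e) ∧
        ∀ z ∈ basePolytope (G.w e), dotp z x ≤ dotp (y e) x) ∧
    (if 1 < p then
        ∀ v, ∑ e ∈ G.E, G.θ e * G.fe e x ^ (p - 1) * y e v
              = lam * G.μ v * (|x v| ^ (p - 1) * sgn (x v))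
      else
        (∀ v, x v ≠ 0 → ∑ e ∈ G.E, G.θ e * y e v = lam * G.μ v * sgn (x v)) ∧
        (∀ v, x v = 0 → |∑ e ∈ G.E, G.θ e * y e v| ≤ lam * G.μ v))

/-- Vertices `u, v` are connected inside the induced sub-hypergraph `G[W]`
(the boundary volume in `G[W]` of `S ⊆ W` equals `Σ_{e ∈ E} θ_e w_e(S)`). -/
def VertConnectedIn (W : Finset (Fin N)) (u v : Fin N) : Prop :=
  u = v ∨ ∀ S ⊆ W, u ∈ S → v ∉ S → 0 < G.volB S

/-- `C` is (the vertex set of) a connected component of the induced sub-hypergraph `G[W]`. -/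
def IsComponent (W C : Finset (Fin N)) : Prop :=
  C ⊆ W ∧ C.Nonempty ∧
    (∀ u ∈ C, ∀ v ∈ C, G.VertConnectedIn W u v) ∧
    (∀ u ∈ C, ∀ v ∈ W, G.VertConnectedIn W u v → v ∈ C)

end SubmodularHypergraph

def posSupp {N : ℕ} (x : Fin N → ℝ) : Finset (Fin N) := Finset.univ.filter fun v => 0 < x v
def negSupp {N : ℕ} (x : Fin N → ℝ) : Finset (Fin N) := Finset.univ.filter fun v => x v < 0
def nonnegSupp {N : ℕ} (x : Fin N → ℝ) : Finset (Fin N) := Finset.univ.filter fun v => 0 ≤ x v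
def nonposSupp {N : ℕ} (x : Fin N → ℝ) : Finset (Fin N) := Finset.univ.filter fun v => x v ≤ 0

namespace SubmodularHypergraph

variable {N : ℕ} (G : SubmodularHypergraph N)

/-- The number of strong nodal domains of `x` (positive ones plus negative ones). -/
def strongNodalCount (x : Fin N → ℝ) : ℕ :=
  {C : Finset (Fin N) | G.IsComponent (posSupp x) C}.ncard +
  {C : Finset (Fin N) | G.IsComponent (negSupp x) C}.ncard

/-- The number of weak nodal domains of `x` (positive ones plus negative ones). -/
def weakNodalCount (x : Fin N → ℝ) : ℕ :=
  {C : Finset (Fin N) | G.IsComponent (nonnegSupp x) C}.ncard +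
  {C : Finset (Fin N) | G.IsComponent (nonposSupp x) C}.ncard

/-- The collection of strong nodal domains of `x`. -/
def strongNodalDomains (x : Fin N → ℝ) : Set (Finset (Fin N)) :=
  {C | G.IsComponent (posSupp x) C ∨ G.IsComponent (negSupp x) C}

/-- The collection of weak nodal domains of `x`. -/
def weakNodalDomains (x : Fin N → ℝ) : Set (Finset (Fin N)) :=
  {C | G.IsComponent (nonnegSupp x) C ∨ G.IsComponent (nonposSupp x) C}

/-- `Z_{p,μ}(x) = min_c ‖x − c·𝟙‖_{ℓp,μ}^p`. -/
def Z (p : ℝ) (x : Fin N → ℝ) : ℝ := ⨅ c : ℝ, ∑ v, G.μ v * |x v - c| ^ p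

/-- `𝓡_p(x) = Q_p(x) / Z_{p,μ}(x)`. -/
def Rq (p : ℝ) (x : Fin N → ℝ) : ℝ := G.Q p x / G.Z p x

/-- The `k`-way Cheeger constant `h_k`. -/
def cheegerConst (k : ℕ) : ℝ :=
  sInf {c : ℝ | ∃ S : Fin k → Finset (Fin N),
    (∀ i, (S i).Nonempty) ∧ (∀ i j, i ≠ j → Disjoint (S i) (S j)) ∧
    c = ⨆ i, G.conductance (S i)}

end SubmodularHypergraph

/-- There is an odd continuous map `h : A → ℝ^k ∖ {0}`. -/
def genusLE {N : ℕ} (A : Set (Fin N → ℝ)) (k : ℕ) : Prop :=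
  ∃ h : (Fin N → ℝ) → (Fin k → ℝ),
    ContinuousOn h A ∧ (∀ x ∈ A, h (-x) = -h x) ∧ ∀ x ∈ A, h x ≠ 0

/-- The Krasnoselski genus of a set. -/
def genus {N : ℕ} (A : Set (Fin N → ℝ)) : ℕ∞ :=
  sInf ((fun n : ℕ => (n : ℕ∞)) '' {n | genusLE A n})

namespace SubmodularHypergraph

variable {N : ℕ} (G : SubmodularHypergraph N)

/-- The `k`-th variational eigenvalue `λ_k^{(p)}` of `△_p`:
`min` over closed symmetric `A ⊆ S_{p,μ}` with `γ(A) ≥ k` of `max_{x ∈ A} Q_p(x)`. -/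
def varEigen (p : ℝ) (k : ℕ) : ℝ :=
  sInf ((fun A : Set (Fin N → ℝ) => sSup (G.Q p '' A)) ''
    {A | IsClosed A ∧ (∀ x ∈ A, -x ∈ A) ∧
         A ⊆ {x | G.normLpPow p x = 1} ∧ (k : ℕ∞) ≤ genus A})

end SubmodularHypergraph

/-! ### Auxiliary lemmas for Statement 5 -/

section Stmt5Aux

set_option maxHeartbeats 1600000

open MeasureTheory

variable {N : ℕ}

/-- The set of `t` whose level set equals a fixed `S` is measurable. -/
lemma measurableSet_levelPre (x : Fin N → ℝ) (S : Finset (Fin N)) :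
    MeasurableSet {u : ℝ | (Finset.univ.filter fun v => u < x v) = S} := by
  have h : {u : ℝ | (Finset.univ.filter fun v => u < x v) = S}
      = ⋂ v : Fin N, {u : ℝ | u < x v ↔ v ∈ S} := by
    ext u
    simp only [Set.mem_setOf_eq, Set.mem_iInter, Finset.ext_iff, Finset.mem_filter,
      Finset.mem_univ, true_and]
  rw [h]
  refine MeasurableSet.iInter fun v => ?_
  by_cases hv : v ∈ S
  · have h2 : {u : ℝ | u < x v ↔ v ∈ S} = Set.Iio (x v) := by ext u; simp [hv]
    rw [h2]; exact measurableSet_Iio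
  · have h2 : {u : ℝ | u < x v ↔ v ∈ S} = Set.Ici (x v) := by ext u; simp [hv, not_lt]
    rw [h2]; exact measurableSet_Ici

lemma intervalIntegrable_sum_fun {ι : Type*} (s : Finset ι) {f : ι → ℝ → ℝ}
    {μ : Measure ℝ} {a b : ℝ} (h : ∀ i ∈ s, IntervalIntegrable (f i) μ a b) :
    IntervalIntegrable (fun t => ∑ i ∈ s, f i t) μ a b := by
  have h2 := IntervalIntegrable.sum s h
  have h3 : (∑ i ∈ s, f i) = fun t => ∑ i ∈ s, f i t := by
    funext t
    exact Finset.sum_apply _ _ _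
  rwa [h3] at h2

lemma intervalIntegrable_indicator_const {s : Set ℝ} (hs : MeasurableSet s) (c : ℝ) (a b : ℝ) :
    IntervalIntegrable (s.indicator fun _ => c) volume a b := by
  constructor <;>
    exact (MeasureTheory.integrableOn_const measure_Ioc_lt_top.ne).indicator hs

lemma levelSet_eq_sum (F : Finset (Fin N) → ℝ) (x : Fin N → ℝ) (t : ℝ) :
    F (Finset.univ.filter fun v => t < x v)
      = ∑ S ∈ (Finset.univ : Finset (Fin N)).powerset,
          Set.indicator {u : ℝ | (Finset.univ.filter fun v => u < x v) = S} (fun _ => F S) t := by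
  rw [Finset.sum_eq_single (Finset.univ.filter fun v => t < x v)]
  · rw [Set.indicator_of_mem]; exact rfl
  · intro S _ hS
    exact Set.indicator_of_notMem (fun h => hS h.symm) _
  · intro h
    exact absurd (Finset.mem_powerset.2 (Finset.subset_univ _)) h

lemma intervalIntegrable_levelSet (F : Finset (Fin N) → ℝ) (x : Fin N → ℝ) (a b : ℝ) :
    IntervalIntegrable (fun t => F (Finset.univ.filter fun v => t < x v)) volume a b := by
  have h : (fun t => F (Finset.univ.filter fun v => t < x v))
      = fun t => ∑ S ∈ (Finset.univ : Finset (Fin N)).powerset,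
          Set.indicator {u : ℝ | (Finset.univ.filter fun v => u < x v) = S} (fun _ => F S) t :=
    funext fun t => levelSet_eq_sum F x t
  rw [h]
  exact intervalIntegrable_sum_fun _ fun S _ =>
    intervalIntegrable_indicator_const (measurableSet_levelPre x S) (F S) a b

/-- The Lovász extension of a nonnegative set function is nonnegative. -/
lemma lovasz_nonneg {F : Finset (Fin N) → ℝ} (hF : ∀ S, 0 ≤ F S) (x : Fin N → ℝ) :
    0 ≤ lovasz F x := by
  have hmM : (⨅ v, x v) ≤ (⨆ v, x v) := by
    cases isEmpty_or_nonempty (Fin N) with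
    | inl h => rw [Real.iInf_of_isEmpty, Real.iSup_of_isEmpty]
    | inr h =>
      obtain ⟨v⟩ := h
      exact le_trans (ciInf_le (Set.finite_range x).bddBelow v)
        (le_ciSup (Set.finite_range x).bddAbove v)
  exact intervalIntegral.integral_nonneg hmM fun u _ => hF _

lemma fe_nonneg (G : SubmodularHypergraph N) {e : Finset (Fin N)} (he : e ∈ G.E)
    (x : Fin N → ℝ) : 0 ≤ G.fe e x :=
  lovasz_nonneg (G.w_nonneg e he) x

lemma w_univ_eq_zero (G : SubmodularHypergraph N) {e : Finset (Fin N)} (he : e ∈ G.E) :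
    G.w e Finset.univ = 0 := by
  have h1 := G.w_inter e he Finset.univ
  rw [Finset.univ_inter] at h1
  have h2 := G.w_symm e he e Finset.Subset.rfl
  rw [Finset.sdiff_self] at h2
  rw [h1, h2, G.w_empty e he]

/-- Core lemma: if all Lovász extensions vanish at `x` and `G` is connected,
then `x` is constant. -/
lemma const_of_fe_zero (G : SubmodularHypergraph N) (hG : G.Connected) (x : Fin N → ℝ)
    (hf : ∀ e ∈ G.E, G.fe e x = 0) : ∃ c : ℝ, ∀ v, x v = c := by
  rcases Nat.eq_zero_or_pos N with hN | hN
  · subst hN; exact ⟨0, fun v => v.elim0⟩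
  have hne : Nonempty (Fin N) := ⟨⟨0, hN⟩⟩
  refine ⟨x ⟨0, hN⟩, fun v => ?_⟩
  by_contra hvne
  have hmle : ∀ u, (⨅ v, x v) ≤ x u := fun u => ciInf_le (Set.finite_range x).bddBelow u
  have hleM : ∀ u, x u ≤ (⨆ v, x v) := fun u => le_ciSup (Set.finite_range x).bddAbove u
  have hmM : (⨅ v, x v) < (⨆ v, x v) := by
    rcases lt_or_gt_of_ne hvne with h | h
    · exact lt_of_le_of_lt (hmle v) (lt_of_lt_of_le h (hleM _))
    · exact lt_of_le_of_lt (hmle _) (lt_of_lt_of_le h (hleM _))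
  have hint : ∀ e ∈ G.E, IntervalIntegrable
      (fun t => G.θ e * G.w e (Finset.univ.filter fun v => t < x v)) volume
      (⨅ v, x v) (⨆ v, x v) := fun e _ =>
    (intervalIntegrable_levelSet (G.w e) x _ _).const_mul (G.θ e)
  have hsum0 : ∑ e ∈ G.E, G.θ e * G.fe e x = 0 :=
    Finset.sum_eq_zero fun e he => by rw [hf e he, mul_zero]
  have key : ∑ e ∈ G.E, G.θ e * G.fe e x
      = ∫ t in (⨅ v, x v)..(⨆ v, x v),
          ∑ e ∈ G.E, G.θ e * G.w e (Finset.univ.filter fun v => t < x v) := by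
    rw [intervalIntegral.integral_finset_sum hint]
    refine Finset.sum_congr rfl fun e he => ?_
    rw [intervalIntegral.integral_const_mul]
    rfl
  have hpos : 0 < ∫ t in (⨅ v, x v)..(⨆ v, x v),
      ∑ e ∈ G.E, G.θ e * G.w e (Finset.univ.filter fun v => t < x v) := by
    apply intervalIntegral.intervalIntegral_pos_of_pos_on
    · exact intervalIntegrable_sum_fun _ hint
    · intro t ht
      obtain ⟨v1, hv1⟩ := exists_lt_of_lt_ciSup ht.2
      obtain ⟨v2, hv2⟩ := exists_lt_of_ciInf_lt ht.1
      have h1 : (Finset.univ.filter fun v => t < x v).Nonempty :=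
        ⟨v1, Finset.mem_filter.2 ⟨Finset.mem_univ v1, hv1⟩⟩
      have h2 : (Finset.univ.filter fun v => t < x v) ≠ Finset.univ := by
        intro hEq
        have hv2m : v2 ∈ Finset.univ.filter fun v => t < x v := by
          rw [hEq]; exact Finset.mem_univ v2
        exact absurd (Finset.mem_filter.1 hv2m).2 (not_lt.2 hv2.le)
      simpa [SubmodularHypergraph.volB] using hG _ h1 h2
    · exact hmM
  rw [← key, hsum0] at hpos
  exact lt_irrefl 0 hpos

/-- Greedy construction: the Lovász extension value is attained by some element
of the base polytope. -/
lemma exists_base_dotp_eq_lovasz (F : Finset (Fin N) → ℝ) (hsub : Submodular F)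
    (h0 : F ∅ = 0) (huniv : F Finset.univ = 0) (x : Fin N → ℝ) :
    ∃ z : Fin N → ℝ, z ∈ basePolytope F ∧ dotp z x = lovasz F x := by
  cases N with
  | zero =>
    refine ⟨0, ⟨fun S => ?_, by simp⟩, ?_⟩
    · have hS : S = ∅ := Finset.eq_empty_of_forall_notMem fun v => v.elim0
      simp [hS, h0]
    · have h1 : dotp (0 : Fin 0 → ℝ) x = 0 := by simp [dotp]
      have h2 : lovasz F x = 0 := by
        rw [lovasz, Real.iInf_of_isEmpty, Real.iSup_of_isEmpty, intervalIntegral.integral_same]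
      rw [h1, h2]
  | succ n =>
    set σ := Tuple.sort (fun i : Fin (n + 1) => -x i) with hσdef
    have hmono : Monotone ((fun i : Fin (n + 1) => -x i) ∘ σ) := Tuple.monotone_sort _
    have hanti : ∀ i j : Fin (n + 1), i ≤ j → x (σ j) ≤ x (σ i) := by
      intro i j hij
      have h := hmono hij
      simpa using h
    set A : ℕ → Finset (Fin (n + 1)) :=
      (fun k => Finset.univ.filter fun v => (σ.symm v : ℕ) < k) with hA
    set z : Fin (n + 1) → ℝ :=
      (fun v => F (A ((σ.symm v : ℕ) + 1)) - F (A (σ.symm v))) with hz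
    have hA0 : A 0 = ∅ := by
      rw [hA]; apply Finset.eq_empty_of_forall_notMem; intro v
      simp
    have hAtop : ∀ k, n + 1 ≤ k → A k = Finset.univ := by
      intro k hk
      rw [hA]; apply Finset.eq_univ_of_forall; intro v
      simp only [Finset.mem_filter, Finset.mem_univ, true_and]
      exact lt_of_lt_of_le (σ.symm v).isLt hk
    have hAsucc : ∀ k (hk : k < n + 1), A (k + 1) = insert (σ ⟨k, hk⟩) (A k) := by
      intro k hk
      ext v
      simp only [hA, Finset.mem_filter, Finset.mem_univ, true_and, Finset.mem_insert]
      constructor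
      · intro h
        rcases Nat.lt_succ_iff_lt_or_eq.1 h with h | h
        · exact Or.inr h
        · left
          have hv : σ.symm v = ⟨k, hk⟩ := Fin.ext h
          rw [← hv, Equiv.apply_symm_apply]
      · rintro (rfl | h)
        · rw [Equiv.symm_apply_apply]; exact Nat.lt_succ_self k
        · exact Nat.lt_succ_of_lt h
    have hnotmem : ∀ k (hk : k < n + 1), σ ⟨k, hk⟩ ∉ A k := by
      intro k hk hmem
      rw [hA] at hmem
      simp only [Finset.mem_filter, Finset.mem_univ, true_and, Equiv.symm_apply_apply] at hmem
      exact lt_irrefl k hmem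
    have hzval : ∀ k (hk : k < n + 1), z (σ ⟨k, hk⟩) = F (A (k + 1)) - F (A k) := by
      intro k hk
      rw [hz]
      simp only [Equiv.symm_apply_apply]
    have hsumA : ∀ k, ∑ v ∈ A k, z v = F (A k) := by
      intro k
      induction k with
      | zero => rw [hA0, Finset.sum_empty, h0]
      | succ k ih =>
        by_cases hk : k < n + 1
        · rw [hAsucc k hk, Finset.sum_insert (hnotmem k hk), ih, hzval k hk, hAsucc k hk]
          ring
        · rw [Nat.not_lt] at hk
          rw [hAtop (k + 1) (Nat.le_succ_of_le hk), ← hAtop k hk]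
          exact ih
    have hineq : ∀ (S : Finset (Fin (n + 1))) k, ∑ v ∈ S ∩ A k, z v ≤ F (S ∩ A k) := by
      intro S k
      induction k with
      | zero => rw [hA0, Finset.inter_empty, Finset.sum_empty, h0]
      | succ k ih =>
        by_cases hk : k < n + 1
        · by_cases hvS : σ ⟨k, hk⟩ ∈ S
          · have hins : S ∩ A (k + 1) = insert (σ ⟨k, hk⟩) (S ∩ A k) := by
              rw [hAsucc k hk]
              ext u
              simp only [Finset.mem_inter, Finset.mem_insert]
              constructor
              · rintro ⟨hu, rfl | hA'⟩
                · exact Or.inl rfl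
                · exact Or.inr ⟨hu, hA'⟩
              · rintro (rfl | ⟨hu, hA'⟩)
                · exact ⟨hvS, Or.inl rfl⟩
                · exact ⟨hu, Or.inr hA'⟩
            have hsub' := hsub (insert (σ ⟨k, hk⟩) (S ∩ A k)) (A k)
            have hu : insert (σ ⟨k, hk⟩) (S ∩ A k) ∪ A k = A (k + 1) := by
              rw [hAsucc k hk]
              ext u
              simp only [Finset.mem_union, Finset.mem_insert, Finset.mem_inter]
              tauto
            have hi : (insert (σ ⟨k, hk⟩) (S ∩ A k)) ∩ A k = S ∩ A k := by
              ext u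
              simp only [Finset.mem_inter, Finset.mem_insert]
              constructor
              · rintro ⟨rfl | ⟨hu, _⟩, hA'⟩
                · exact absurd hA' (hnotmem k hk)
                · exact ⟨hu, hA'⟩
              · rintro ⟨hu, hA'⟩
                exact ⟨Or.inr ⟨hu, hA'⟩, hA'⟩
            rw [hu, hi] at hsub'
            rw [hins, Finset.sum_insert (fun h => hnotmem k hk (Finset.mem_inter.1 h).2),
              hzval k hk]
            linarith [ih]
          · have heq2 : S ∩ A (k + 1) = S ∩ A k := by
              rw [hAsucc k hk]
              ext u
              simp only [Finset.mem_inter, Finset.mem_insert]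
              constructor
              · rintro ⟨hu, rfl | hA'⟩
                · exact absurd hu hvS
                · exact ⟨hu, hA'⟩
              · rintro ⟨hu, hA'⟩
                exact ⟨hu, Or.inr hA'⟩
            rw [heq2]; exact ih
        · rw [Nat.not_lt] at hk
          rw [hAtop (k + 1) (Nat.le_succ_of_le hk), ← hAtop k hk]
          exact ih
    have hz_le : ∀ S : Finset (Fin (n + 1)), ∑ v ∈ S, z v ≤ F S := by
      intro S
      have h := hineq S (n + 1)
      rwa [hAtop (n + 1) le_rfl, Finset.inter_univ] at h
    have hz_sum : ∑ v, z v = 0 := by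
      have h := hsumA (n + 1)
      rwa [hAtop (n + 1) le_rfl, huniv] at h
    -- the auxiliary nonincreasing rearrangement, as a function on ℕ
    set xs : ℕ → ℝ := (fun k => x (σ ⟨min k n, Nat.lt_succ_of_le (min_le_right k n)⟩)) with hxs
    have hxs_val : ∀ (m : ℕ) (hmn : m ≤ n), xs m = x (σ ⟨m, Nat.lt_succ_of_le hmn⟩) := by
      intro m hmn
      have h : (⟨m ⊓ n, Nat.lt_succ_of_le (min_le_right m n)⟩ : Fin (n + 1))
          = ⟨m, Nat.lt_succ_of_le hmn⟩ := Fin.ext (min_eq_left hmn)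
      simp only [hxs]
      rw [h]
    have hxs_anti : ∀ k l : ℕ, k ≤ l → xs l ≤ xs k := by
      intro k l hkl
      exact hanti _ _ (by simp only [Fin.mk_le_mk]; omega)
    have hxs_fin : ∀ i : Fin (n + 1), xs (i : ℕ) = x (σ i) := by
      intro i
      rw [hxs_val (i : ℕ) (Nat.lt_succ_iff.1 i.isLt)]
    have hlast : ∀ v, xs n ≤ x v := by
      intro v
      have h2 : x (σ ⟨n, Nat.lt_succ_self n⟩) ≤ x (σ (σ.symm v)) :=
        hanti _ _ (by simp only [Fin.mk_le_mk, Fin.le_def]; exact Nat.lt_succ_iff.1 (σ.symm v).isLt)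
      rw [Equiv.apply_symm_apply] at h2
      rw [hxs_val n le_rfl]
      exact h2
    have hfirst : ∀ v, x v ≤ xs 0 := by
      intro v
      have h2 : x (σ (σ.symm v)) ≤ x (σ ⟨0, Nat.succ_pos n⟩) :=
        hanti _ _ (by simp [Fin.le_def])
      rw [Equiv.apply_symm_apply] at h2
      rw [hxs_val 0 (Nat.zero_le n)]
      exact h2
    have hm : (⨅ v, x v) = xs n := le_antisymm
      (by rw [hxs_val n le_rfl]; exact ciInf_le (Set.finite_range x).bddBelow _)
      (le_ciInf hlast)
    have hM : (⨆ v, x v) = xs 0 := le_antisymm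
      (ciSup_le hfirst)
      (by rw [hxs_val 0 (Nat.zero_le n)]; exact le_ciSup (Set.finite_range x).bddAbove _)
    -- dot product as telescoping sum
    have hdot : dotp z x = ∑ k ∈ Finset.range n, F (A (k + 1)) * (xs k - xs (k + 1)) := by
      have h1 : dotp z x = ∑ i : Fin (n + 1), z (σ i) * x (σ i) :=
        (Equiv.sum_comp σ fun v => z v * x v).symm
      have h2 : ∀ i : Fin (n + 1), z (σ i) * x (σ i)
          = (fun k => (F (A (k + 1)) - F (A k)) * xs k) (i : ℕ) := by
        intro i
        simp only
        rw [hxs_fin i, hz]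
        simp only [Equiv.symm_apply_apply]
      rw [h1]
      calc ∑ i : Fin (n + 1), z (σ i) * x (σ i)
          = ∑ i : Fin (n + 1), (fun k => (F (A (k + 1)) - F (A k)) * xs k) (i : ℕ) :=
            Finset.sum_congr rfl fun i _ => h2 i
        _ = ∑ k ∈ Finset.range (n + 1), (F (A (k + 1)) - F (A k)) * xs k :=
            Fin.sum_univ_eq_sum_range (fun k => (F (A (k + 1)) - F (A k)) * xs k) (n + 1)
        _ = ∑ k ∈ Finset.range (n + 1), (F (A (k + 1)) * xs k - F (A k) * xs k) :=
            Finset.sum_congr rfl fun k _ => by ring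
        _ = (∑ k ∈ Finset.range (n + 1), F (A (k + 1)) * xs k)
              - ∑ k ∈ Finset.range (n + 1), F (A k) * xs k := Finset.sum_sub_distrib _ _
        _ = ∑ k ∈ Finset.range n, F (A (k + 1)) * (xs k - xs (k + 1)) := by
            rw [Finset.sum_range_succ, Finset.sum_range_succ', hAtop (n + 1) le_rfl, huniv,
              hA0, h0, zero_mul, zero_mul, add_zero, add_zero, ← Finset.sum_sub_distrib]
            refine Finset.sum_congr rfl fun k _ => by ring
    -- Lovász extension as the same telescoping sum
    have hintk : ∀ k, k < n → IntervalIntegrable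
        (fun t => F (Finset.univ.filter fun v => t < x v)) volume
        (xs (n - k)) (xs (n - (k + 1))) := fun k _ =>
      intervalIntegrable_levelSet F x _ _
    have hadj := intervalIntegral.sum_integral_adjacent_intervals (μ := volume)
      (a := fun k => xs (n - k)) (n := n) hintk
    have hlov : lovasz F x = ∑ k ∈ Finset.range n,
        ∫ t in (xs (n - k))..(xs (n - (k + 1))),
          F (Finset.univ.filter fun v => t < x v) := by
      simp only [Nat.sub_zero, Nat.sub_self] at hadj
      rw [lovasz, hm, hM]
      exact hadj.symm
    have hpiece : ∀ k, k < n →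
        (∫ t in (xs (n - k))..(xs (n - (k + 1))), F (Finset.univ.filter fun v => t < x v))
          = F (A (n - k)) * (xs (n - (k + 1)) - xs (n - k)) := by
      intro k hk
      have hle : xs (n - k) ≤ xs (n - (k + 1)) := hxs_anti _ _ (by omega)
      have hlevel : Set.EqOn (fun t => F (Finset.univ.filter fun v => t < x v))
          (fun _ => F (A (n - k))) (Set.Ioo (xs (n - k)) (xs (n - (k + 1)))) := by
        intro t ht
        simp only
        congr 1
        ext v
        simp only [Finset.mem_filter, Finset.mem_univ, true_and, hA]
        constructor
        · intro hlt
          by_contra hge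
          rw [Nat.not_lt] at hge
          have hxv : x v ≤ xs (n - k) := by
            have h3 : x (σ (σ.symm v)) ≤ x (σ ⟨n - k, by omega⟩) :=
              hanti _ _ (by simp only [Fin.mk_le_mk, Fin.le_def]; omega)
            rw [Equiv.apply_symm_apply] at h3
            rw [hxs_val (n - k) (by omega)]
            exact h3
          linarith [ht.1]
        · intro hlt
          have hxv : xs (n - (k + 1)) ≤ x v := by
            have h3 : x (σ ⟨n - (k + 1), by omega⟩) ≤ x (σ (σ.symm v)) :=
              hanti _ _ (by simp only [Fin.mk_le_mk, Fin.le_def]; omega)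
            rw [Equiv.apply_symm_apply] at h3
            rw [hxs_val (n - (k + 1)) (by omega)]
            exact h3
          linarith [ht.2]
      rw [intervalIntegral.integral_of_le hle, MeasureTheory.integral_Ioc_eq_integral_Ioo,
        MeasureTheory.setIntegral_congr_fun measurableSet_Ioo hlevel,
        MeasureTheory.setIntegral_const, MeasureTheory.measureReal_def, Real.volume_Ioo,
        ENNReal.toReal_ofReal (by linarith), smul_eq_mul]
      ring
    have hlov2 : lovasz F x = ∑ k ∈ Finset.range n, F (A (n - k)) * (xs (n - (k + 1)) - xs (n - k)) := by
      rw [hlov]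
      exact Finset.sum_congr rfl fun k hk => hpiece k (Finset.mem_range.1 hk)
    have hreflect : ∑ k ∈ Finset.range n, F (A (n - k)) * (xs (n - (k + 1)) - xs (n - k))
        = ∑ k ∈ Finset.range n, F (A (k + 1)) * (xs k - xs (k + 1)) := by
      conv_lhs => rw [← Finset.sum_range_reflect
        (fun k => F (A (n - k)) * (xs (n - (k + 1)) - xs (n - k))) n]
      refine Finset.sum_congr rfl fun j hj => ?_
      have hj' := Finset.mem_range.1 hj
      have e1 : n - (n - 1 - j) = j + 1 := by omega
      have e2 : n - (n - 1 - j + 1) = j := by omega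
      rw [e1, e2]
    refine ⟨z, ⟨hz_le, hz_sum⟩, ?_⟩
    rw [hdot, hlov2, hreflect]

end Stmt5Aux
/-- In a connected submodular hypergraph, every eigenvector of `△_p`
(`p ≥ 1`) associated with the eigenvalue `0` is constant; in particular `Q_p(x) = 0`
forces `x` to be constant. -/
theorem stmt5 {N : ℕ} (G : SubmodularHypergraph N) (p : ℝ) (hp : 1 ≤ p)
    (hG : G.Connected) :
    (∀ x : Fin N → ℝ, G.IsEigenpair p 0 x → ∃ c : ℝ, ∀ v, x v = c) ∧
    (∀ x : Fin N → ℝ, G.Q p x = 0 → ∃ c : ℝ, ∀ v, x v = c) := by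
  constructor
  · intro x hx
    obtain ⟨hx0, y, hy, heq⟩ := hx
    have hmax : ∀ e ∈ G.E, ∀ z ∈ basePolytope (G.w e), dotp z x ≤ dotp (y e) x :=
      fun e he => (hy e he).2
    have h0B : ∀ e ∈ G.E, (0 : Fin N → ℝ) ∈ basePolytope (G.w e) := by
      intro e he
      refine ⟨fun S => ?_, by simp⟩
      simpa using G.w_nonneg e he S
    have hy_nonneg : ∀ e ∈ G.E, 0 ≤ dotp (y e) x := by
      intro e he
      have h := hmax e he 0 (h0B e he)
      simpa [dotp] using h
    have hle : ∀ e ∈ G.E, G.fe e x ≤ dotp (y e) x := by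
      intro e he
      obtain ⟨z, hzB, hzeq⟩ := exists_base_dotp_eq_lovasz (G.w e) (G.w_submodular e he)
        (G.w_empty e he) (w_univ_eq_zero G he) x
      have h := hmax e he z hzB
      rw [hzeq] at h
      exact h
    have hswap : ∀ c : Finset (Fin N) → ℝ,
        ∑ v, (∑ e ∈ G.E, c e * y e v) * x v = ∑ e ∈ G.E, c e * dotp (y e) x := by
      intro c
      simp only [Finset.sum_mul, dotp, Finset.mul_sum]
      rw [Finset.sum_comm]
      exact Finset.sum_congr rfl fun e _ => Finset.sum_congr rfl fun v _ => by ring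
    have hfe0 : ∀ e ∈ G.E, G.fe e x = 0 := by
      by_cases hp1 : 1 < p
      · rw [if_pos hp1] at heq
        have hzero : ∑ e ∈ G.E, (G.θ e * G.fe e x ^ (p - 1)) * dotp (y e) x = 0 := by
          rw [← hswap fun e => G.θ e * G.fe e x ^ (p - 1)]
          apply Finset.sum_eq_zero
          intro v _
          rw [heq v]
          simp
        have hterm : ∀ e ∈ G.E, 0 ≤ (G.θ e * G.fe e x ^ (p - 1)) * dotp (y e) x :=
          fun e he => mul_nonneg (mul_nonneg (G.θ_pos e he).le
            (Real.rpow_nonneg (fe_nonneg G he x) _)) (hy_nonneg e he)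
        intro e he
        have h0 := (Finset.sum_eq_zero_iff_of_nonneg hterm).1 hzero e he
        rcases mul_eq_zero.1 h0 with h | h
        · rcases mul_eq_zero.1 h with h | h
          · exact absurd h (G.θ_pos e he).ne'
          · exact ((Real.rpow_eq_zero_iff_of_nonneg (fe_nonneg G he x)).1 h).1
        · have h1 := hle e he
          have h2 := fe_nonneg G he x
          linarith
      · rw [if_neg hp1] at heq
        obtain ⟨h1, h2⟩ := heq
        have hall : ∀ v, ∑ e ∈ G.E, G.θ e * y e v = 0 := by
          intro v
          by_cases hv : x v = 0
          · have h := h2 v hv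
            rw [zero_mul] at h
            exact abs_nonpos_iff.1 h
          · have h := h1 v hv
            rw [zero_mul, zero_mul] at h
            exact h
        have hzero : ∑ e ∈ G.E, G.θ e * dotp (y e) x = 0 := by
          rw [← hswap fun e => G.θ e]
          apply Finset.sum_eq_zero
          intro v _
          rw [hall v, zero_mul]
        have hterm : ∀ e ∈ G.E, 0 ≤ G.θ e * dotp (y e) x :=
          fun e he => mul_nonneg (G.θ_pos e he).le (hy_nonneg e he)
        intro e he
        have h0 := (Finset.sum_eq_zero_iff_of_nonneg hterm).1 hzero e he
        have hdy : dotp (y e) x = 0 := by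
          rcases mul_eq_zero.1 h0 with h | h
          · exact absurd h (G.θ_pos e he).ne'
          · exact h
        have h1' := hle e he
        have h2' := fe_nonneg G he x
        linarith
    exact const_of_fe_zero G hG x hfe0
  · intro x hQ
    apply const_of_fe_zero G hG x
    intro e he
    have hterm : ∀ e ∈ G.E, 0 ≤ G.θ e * G.fe e x ^ p :=
      fun e he => mul_nonneg (G.θ_pos e he).le (Real.rpow_nonneg (fe_nonneg G he x) p)
    rw [SubmodularHypergraph.Q] at hQ
    have h0 := (Finset.sum_eq_zero_iff_of_nonneg hterm).1 hQ e he
    rcases mul_eq_zero.1 h0 with h | h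
    · exact absurd h (G.θ_pos e he).ne'
    · exact ((Real.rpow_eq_zero_iff_of_nonneg (fe_nonneg G he x)).1 h).1
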